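/- Let k be a field of prime characteristic ℓ and let a ∈ k be such that b^ℓ ≠ a for every b ∈ k. Let A be a nontrivial unital associative k-algebra and let u ∈ A satisfy u^ℓ = a·1_A. Then u admits no Jordan–Chevalley decomposition: there exist no elements d, s ∈ A with d absolutely semisimple, s nilpotent, u = d + s and ds = sd. -/

import Mathlib

open Polynomial

/-- An element of a `k`-algebra is absolutely semisimple if it has a separable
annihilating polynomial. -/
def AbsSemisimple (k : Type*) [Field k] {A : Type*} [Ring A] [Algebra k A] (u : A) : Prop :=
  ∃ f : k[X], f.Separable ∧ aeval u f = 0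

theorem no_jordan_chevalley_of_inseparable
    {k : Type*} [Field k] (ℓ : ℕ) (hℓ : ℓ.Prime) (hchar : CharP k ℓ)
    (a : k) (ha : ∀ b : k, b ^ ℓ ≠ a)
    {A : Type*} [Ring A] [Nontrivial A] [Algebra k A]
    (u : A) (hu : u ^ ℓ = algebraMap k A a) :
    ¬ ∃ d s : A, AbsSemisimple k d ∧ IsNilpotent s ∧ u = d + s ∧ d * s = s * d := by
  rintro ⟨d, s, ⟨f, hfsep, hfd⟩, ⟨n, hsn⟩, rfl, hcomm⟩
  haveI : Fact ℓ.Prime := ⟨hℓ⟩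
  haveI : CharP A ℓ := charP_of_injective_algebraMap (algebraMap k A).injective ℓ
  haveI : ExpChar A ℓ := ExpChar.prime hℓ
  set p : k[X] := X ^ ℓ - C a with hp
  have hpirr : Irreducible p := X_pow_sub_C_irreducible_of_prime hℓ ha
  -- p does not divide f
  have hpnd : ¬ p ∣ f := by
    intro hdvd
    have hpsep : p.Separable := hfsep.of_dvd hdvd
    have hder : derivative p = 0 := by
      simp [hp, derivative_X_pow, CharP.cast_eq_zero k ℓ]
    rw [Polynomial.Separable, hder] at hpsep
    have : IsUnit p := isCoprime_zero_right.mp hpsep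
    exact hpirr.not_isUnit this
  have hcop : IsCoprime f (p ^ (ℓ ^ n)) :=
    ((hpirr.coprime_iff_not_dvd.mpr hpnd).symm.pow_right)
  -- s ^ ℓ ^ n = 0
  have hsl : s ^ ℓ ^ n = 0 := by
    have hn : n ≤ ℓ ^ n := le_of_lt (Nat.lt_pow_self hℓ.one_lt : n < ℓ ^ n)
    calc s ^ ℓ ^ n = s ^ n * s ^ (ℓ ^ n - n) := by rw [← pow_add, Nat.add_sub_cancel' hn]
    _ = 0 := by rw [hsn, zero_mul]
  -- d ^ ℓ ^ (n+1) = (d+s)^(ℓ^(n+1))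
  have hcd : Commute d s := hcomm
  have hd1 : d ^ ℓ ^ (n + 1) = (d + s) ^ ℓ ^ (n + 1) := by
    rw [add_pow_char_pow_of_commute ℓ _ hcd]
    have : s ^ ℓ ^ (n + 1) = 0 := by
      rw [pow_succ, pow_mul, hsl, zero_pow hℓ.ne_zero]
    rw [this, add_zero]
  have hu2 : (d + s) ^ ℓ ^ (n + 1) = algebraMap k A (a ^ ℓ ^ n) := by
    rw [pow_succ', pow_mul, hu, ← map_pow]
  -- aeval d (p ^ ℓ ^ n) = 0
  have hpd : aeval d (p ^ ℓ ^ n) = 0 := by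
    rw [map_pow]
    have : aeval d p = d ^ ℓ - algebraMap k A a := by simp [hp, Algebra.algebraMap_eq_smul_one]
    rw [this]
    have hc : Commute (d ^ ℓ) (algebraMap k A a) := (Algebra.commutes a _).symm
    rw [sub_pow_char_pow_of_commute ℓ _ hc]
    rw [← pow_mul, ← pow_succ', hd1, hu2, ← map_pow]
    exact sub_self _
  obtain ⟨α, β, hab⟩ := hcop
  have := congrArg (aeval d) hab
  simp only [map_add, map_mul, hfd, hpd, mul_zero, map_one, add_zero] at this
  exact one_ne_zero this.symm
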